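/- For every graph G, the clique-incidence-diversity satisfies ω̃(G) ≤ 2^{cdeg(G)} and the clique-incidence-degree satisfies cideg(G) ≤ cdeg(G) + 1. -/

import Mathlib

variable {V : Type} {W : Type}

/-- Two vertices are true twins: they have the same closed neighbourhood. -/
def twin (G : SimpleGraph V) (x y : V) : Prop :=
  ∀ z, (G.Adj x z ∨ x = z) ↔ (G.Adj y z ∨ y = z)

/-- The true-twin relation as a setoid. -/
def twinSetoid (G : SimpleGraph V) : Setoid V :=
  ⟨twin G, ⟨fun _ _ => Iff.rfl, fun h z => (h z).symm, fun h1 h2 z => (h1 z).trans (h2 z)⟩⟩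

/-- The quotient of `G` by the true-twin relation. -/
def quotGraph (G : SimpleGraph V) : SimpleGraph (Quotient (twinSetoid G)) where
  Adj a b := a ≠ b ∧ ∃ x y, Quotient.mk (twinSetoid G) x = a ∧
    Quotient.mk (twinSetoid G) y = b ∧ G.Adj x y
  symm := by
    constructor
    rintro a b ⟨h, x, y, hx, hy, hxy⟩
    exact ⟨h.symm, y, x, hy, hx, hxy.symm⟩
  loopless := by constructor; rintro a ⟨h, _⟩; exact h rfl

/-- The true-twin class of a vertex. -/
def qmk (G : SimpleGraph V) (v : V) : Quotient (twinSetoid G) :=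
  Quotient.mk (twinSetoid G) v

/-- `K` is a maximal clique of `G`. -/
def MaxClique (G : SimpleGraph V) (K : Set V) : Prop :=
  G.IsClique K ∧ ∀ K', G.IsClique K' → K ⊆ K' → K' = K

/-- `S` is an independent set of `G`. -/
def IndepSet (G : SimpleGraph V) (S : Set V) : Prop :=
  ∀ x ∈ S, ∀ y ∈ S, ¬ G.Adj x y

/-- Independence number. -/
noncomputable def indepNum (G : SimpleGraph V) : ℕ :=
  sSup {n | ∃ S : Set V, IndepSet G S ∧ S.ncard = n}

/-- Clique cover number: minimum number of cliques covering all vertices. -/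
noncomputable def cliqueCoverNum (G : SimpleGraph V) : ℕ :=
  sInf {n | ∃ f : Fin n → Set V, (∀ i, G.IsClique (f i)) ∧ ∀ v, ∃ i, v ∈ f i}

/-- Closed neighbourhood. -/
def cNbhd (G : SimpleGraph V) (v : V) : Set V := insert v (G.neighborSet v)

/-- Local independence number. -/
noncomputable def alphaLoc (G : SimpleGraph V) : ℕ :=
  sSup {n | ∃ v, ∃ S ⊆ cNbhd G v, IndepSet G S ∧ S.ncard = n}

/-- Local clique cover number. -/
noncomputable def thetaLoc (G : SimpleGraph V) : ℕ :=
  sSup {n | ∃ v, cliqueCoverNum (G.induce (cNbhd G v)) = n}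

/-- Clique-incidence-degree: max number of maximal cliques containing a vertex. -/
noncomputable def cideg (G : SimpleGraph V) : ℕ :=
  sSup {n | ∃ v, {K | MaxClique G K ∧ v ∈ K}.ncard = n}

/-- Clique-incidence-diversity: max number of true-twin classes meeting a maximal clique. -/
noncomputable def cliqueIncDiv (G : SimpleGraph V) : ℕ :=
  sSup {n | ∃ K, MaxClique G K ∧ (qmk G '' K).ncard = n}

/-- Clique-degree: max number of other maximal cliques intersecting a maximal clique. -/
noncomputable def cdeg (G : SimpleGraph V) : ℕ :=
  sSup {n | ∃ K, MaxClique G K ∧ {K' | MaxClique G K' ∧ K' ≠ K ∧ (K' ∩ K).Nonempty}.ncard = n}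

/-- Maximum degree. -/
noncomputable def maxDeg (H : SimpleGraph W) : ℕ :=
  sSup {n | ∃ v, (H.neighborSet v).ncard = n}

/-- Clique number. -/
noncomputable def cliqueNum (H : SimpleGraph W) : ℕ :=
  sSup {n | ∃ K : Set W, H.IsClique K ∧ K.ncard = n}

/-- A separation of a graph. -/
def IsSep (H : SimpleGraph W) (A B : Set W) : Prop :=
  A ∪ B = Set.univ ∧ ∀ a ∈ A \ B, ∀ b ∈ B \ A, ¬ H.Adj a b

/-- A tree-decomposition. -/
structure TreeDec {ι : Type} (G : SimpleGraph V) (T : SimpleGraph ι) (β : ι → Set V) : Prop where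
  tree : T.IsTree
  cover : ∀ v, ∃ t, v ∈ β t
  edges : ∀ v w, G.Adj v w → ∃ t, v ∈ β t ∧ w ∈ β t
  subtree : ∀ v, (T.induce {t | v ∈ β t}).Connected

/-- α-treewidth (tree-independence number). -/
noncomputable def alphaTW (G : SimpleGraph V) : ℕ :=
  sInf {n | ∃ (ι : Type) (T : SimpleGraph ι) (β : ι → Set V), TreeDec G T β ∧
    ∀ t, ∀ S ⊆ β t, IndepSet G S → S.ncard ≤ n}

/-- Neighbourhood of a set of vertices (outside the set). -/
def setNbhd (G : SimpleGraph V) (K : Set V) : Set V :=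
  {v | v ∉ K ∧ ∃ x ∈ K, G.Adj v x}

/-- Diversity number of a set `K`: max size of a `K`-diverse set of neighbours. -/
noncomputable def dn (G : SimpleGraph V) (K : Set V) : ℕ :=
  sSup {n | ∃ Y ⊆ setNbhd G K,
    (∀ y1 ∈ Y, ∀ y2 ∈ Y, y1 ≠ y2 → G.neighborSet y1 ∩ K ≠ G.neighborSet y2 ∩ K) ∧ Y.ncard = n}

/-- Cutrank of a set of vertices: F₂-rank of the corresponding submatrix
of the adjacency matrix. -/
noncomputable def cutrank (G : SimpleGraph V) [Fintype V] (X : Set V) : ℕ :=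
  haveI : DecidableRel G.Adj := Classical.decRel _
  haveI : Fintype ↥X := Fintype.ofFinite _
  haveI : Fintype ↥(Xᶜ) := Fintype.ofFinite _
  (Matrix.of fun (x : ↥X) (y : ↥(Xᶜ)) => if G.Adj x.1 y.1 then (1 : ZMod 2) else 0).rank

/-- `G` admits a rank-decomposition of width at most `w`: a tree whose internal
nodes have degree 3, whose leaves are in bijection with `V(G)`, such that every
edge induces a bipartition of the vertices of cutrank at most `w`. -/
def HasRankDecompOfWidth (G : SimpleGraph V) [Fintype V] (w : ℕ) : Prop :=
  ∃ (ι : Type) (T : SimpleGraph ι) (δ : V → ι),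
    T.IsTree ∧ Function.Injective δ ∧
    (∀ t, (T.neighborSet t).ncard = 1 ↔ ∃ v, δ v = t) ∧
    (∀ t, (T.neighborSet t).ncard = 1 ∨ (T.neighborSet t).ncard = 3) ∧
    ∀ a b, T.Adj a b → cutrank G {v | (T.deleteEdges {s(a,b)}).Reachable (δ v) a} ≤ w

/-- An injective enumeration of a path that is induced in `G`. -/
def IsInducedPath (G : SimpleGraph V) {ℓ : ℕ} (x : Fin ℓ → V) : Prop :=
  Function.Injective x ∧ ∀ i j, G.Adj (x i) (x j) ↔ (i.val + 1 = j.val ∨ j.val + 1 = i.val)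


section Aux
open Set

variable {G : SimpleGraph V}

/-- Every clique extends to a maximal clique (finite vertex set). -/
lemma exists_maxclique_ext [Fintype V] (G : SimpleGraph V) {S : Set V} (hS : G.IsClique S) :
    ∃ K, MaxClique G K ∧ S ⊆ K := by
  have hfin : {T : Set V | G.IsClique T ∧ S ⊆ T}.Finite := Set.toFinite _
  obtain ⟨K, ⟨hK, hSK⟩, hmax⟩ :=
    hfin.exists_maximalFor Set.ncard _ ⟨S, hS, subset_rfl⟩
  refine ⟨K, ⟨hK, fun K' hK' hsub => ?_⟩, hSK⟩
  have h1 : K.ncard ≤ K'.ncard := Set.ncard_le_ncard hsub (Set.toFinite _)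
  have h2 := hmax (j := K') ⟨hK', hSK.trans hsub⟩ h1
  exact (Set.eq_of_subset_of_ncard_le hsub h2 (Set.toFinite _)).symm

/-- Twins belong to the same maximal cliques. -/
lemma twin_mem_maxclique (h : twin G u v) {K : Set V} (hK : MaxClique G K) (hu : u ∈ K) :
    v ∈ K := by
  have hvz : ∀ z ∈ K, G.Adj v z ∨ v = z := by
    intro z hz
    by_cases huz : u = z
    · subst huz; exact (h u).mp (Or.inr rfl)
    · exact (h z).mp (Or.inl (hK.1 hu hz huz))
  have hcl : G.IsClique (insert v K) := by
    refine hK.1.insert ?_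
    intro b hb hvb
    rcases hvz b hb with hadj | rfl
    · exact hadj
    · exact absurd rfl hvb
  have := hK.2 _ hcl (Set.subset_insert v K)
  rw [← this]
  exact Set.mem_insert v K

lemma twin_of_same_maxcliques [Fintype V]
    (h : {K : Set V | MaxClique G K ∧ u ∈ K} = {K : Set V | MaxClique G K ∧ v ∈ K}) :
    twin G u v := by
  have key : ∀ a b : V, {K : Set V | MaxClique G K ∧ a ∈ K} = {K | MaxClique G K ∧ b ∈ K} →
      ∀ z, (G.Adj a z ∨ a = z) → (G.Adj b z ∨ b = z) := by
    intro a b hab z hz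
    have hcl : G.IsClique {a, z} := by
      rcases hz with hadj | rfl
      · exact SimpleGraph.isClique_pair.mpr fun _ => hadj
      · simp [SimpleGraph.isClique_pair]
    obtain ⟨K, hK, hsub⟩ := exists_maxclique_ext G hcl
    have haK : a ∈ K := hsub (Set.mem_insert a _)
    have hzK : z ∈ K := hsub (by simp)
    have hbK : b ∈ K := by
      have hmem : K ∈ {K : Set V | MaxClique G K ∧ a ∈ K} := ⟨hK, haK⟩
      rw [hab] at hmem
      exact hmem.2
    by_cases hbz : b = z
    · exact Or.inr hbz
    · exact Or.inl (hK.1 hbK hzK hbz)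
  exact fun z => ⟨key u v h z, key v u h.symm z⟩

end Aux

theorem stmt12 [Fintype V] (G : SimpleGraph V) :
    cliqueIncDiv G ≤ 2 ^ cdeg G ∧ cideg G ≤ cdeg G + 1 := by
  classical
  -- the set of "other maximal cliques meeting K"
  set N : Set V → Set (Set V) :=
    fun K => {K' | MaxClique G K' ∧ K' ≠ K ∧ (K' ∩ K).Nonempty} with hN
  have hbdd : BddAbove {n | ∃ K, MaxClique G K ∧ (N K).ncard = n} := by
    refine ⟨Nat.card (Set V), fun n hn => ?_⟩
    obtain ⟨K, _, rfl⟩ := hn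
    calc (N K).ncard ≤ (Set.univ : Set (Set V)).ncard :=
          Set.ncard_le_ncard (Set.subset_univ _) (Set.toFinite _)
      _ = Nat.card (Set V) := Set.ncard_univ _
  have hNle : ∀ K, MaxClique G K → (N K).ncard ≤ cdeg G := fun K hK =>
    le_csSup hbdd ⟨K, hK, rfl⟩
  constructor
  · refine csSup_le' ?_
    rintro n ⟨K, hK, rfl⟩
    -- map each vertex to its set of other maximal cliques
    set g : V → Set (Set V) := fun v => {K' | MaxClique G K' ∧ K' ≠ K ∧ v ∈ K'} with hg
    -- g is constant on twin classes
    have hgconst : ∀ u v : V, twin G u v → g u = g v := by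
      intro u v huv
      ext K'
      simp only [hg, Set.mem_setOf_eq]
      exact ⟨fun ⟨h1, h2, h3⟩ => ⟨h1, h2, twin_mem_maxclique huv h1 h3⟩,
             fun ⟨h1, h2, h3⟩ => ⟨h1, h2, twin_mem_maxclique (fun z => (huv z).symm) h1 h3⟩⟩
    set φ : Quotient (twinSetoid G) → Set (Set V) := Quotient.lift g hgconst with hφ
    have hinj : Set.InjOn φ (qmk G '' K) := by
      rintro a ⟨u, hu, rfl⟩ b ⟨v, hv, rfl⟩ hab
    -- from g u = g v and u, v ∈ K deduce same maximal cliques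
      have hguv : g u = g v := hab
      have hsame : {K' : Set V | MaxClique G K' ∧ u ∈ K'} =
          {K' : Set V | MaxClique G K' ∧ v ∈ K'} := by
        ext K'
        simp only [Set.mem_setOf_eq]
        constructor
        · rintro ⟨h1, h2⟩
          by_cases hKK : K' = K
          · exact ⟨h1, hKK ▸ hv⟩
          · have : K' ∈ g u := ⟨h1, hKK, h2⟩
            rw [hguv] at this
            exact ⟨h1, this.2.2⟩
        · rintro ⟨h1, h2⟩
          by_cases hKK : K' = K
          · exact ⟨h1, hKK ▸ hu⟩
          · have : K' ∈ g v := ⟨h1, hKK, h2⟩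
            rw [← hguv] at this
            exact ⟨h1, this.2.2⟩
      exact Quotient.sound (twin_of_same_maxcliques hsame)
    have h1 : (qmk G '' K).ncard = (g '' K).ncard := by
      have : φ '' (qmk G '' K) = g '' K := by
        rw [← Set.image_comp]
        rfl
      rw [← this, Set.ncard_image_of_injOn hinj]
    -- g '' K consists of subsets of N K
    have hsub : ∀ v ∈ K, g v ⊆ N K := by
      rintro v hv K' ⟨h1, h2, h3⟩
      exact ⟨h1, h2, v, h3, hv⟩
    -- bound by the powerset of N K
    have h2 : (g '' K).ncard ≤ 2 ^ (N K).ncard := by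
      have hfin : Finite ↥(N K) := Set.toFinite _
      have : (g '' K).ncard ≤ (Set.univ : Set (Set ↥(N K))).ncard := by
        refine Set.ncard_le_ncard_of_injOn
          (fun T => {x : ↥(N K) | (x : Set V) ∈ T}) (fun _ _ => Set.mem_univ _) ?_
          (Set.toFinite _)
        rintro T1 ⟨u, hu, rfl⟩ T2 ⟨v, hv, rfl⟩ hT
        have hT' := Set.ext_iff.mp hT
        ext K'
        constructor
        · intro hK'
          have hmem : K' ∈ N K := hsub u hu hK'
          exact (hT' ⟨K', hmem⟩).mp hK'
        · intro hK'
          have hmem : K' ∈ N K := hsub v hv hK'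
          exact (hT' ⟨K', hmem⟩).mpr hK' 
      calc (g '' K).ncard ≤ (Set.univ : Set (Set ↥(N K))).ncard := this
        _ = Nat.card (Set ↥(N K)) := Set.ncard_univ _
        _ = 2 ^ Nat.card ↥(N K) := by
            have : Fintype ↥(N K) := Fintype.ofFinite _
            simp [Nat.card_eq_fintype_card, Fintype.card_set]
        _ = 2 ^ (N K).ncard := by rw [Nat.card_coe_set_eq]
    calc (qmk G '' K).ncard = (g '' K).ncard := h1
      _ ≤ 2 ^ (N K).ncard := h2
      _ ≤ 2 ^ cdeg G := Nat.pow_le_pow_right (by norm_num) (hNle K hK)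
  · refine csSup_le' ?_
    rintro n ⟨v, rfl⟩
    by_cases hne : {K : Set V | MaxClique G K ∧ v ∈ K}.Nonempty
    · obtain ⟨K, hK, hv⟩ := hne
      have hsub : {K' : Set V | MaxClique G K' ∧ v ∈ K'} ⊆ insert K (N K) := by
        rintro K' ⟨h1, h2⟩
        by_cases hKK : K' = K
        · exact Or.inl hKK
        · exact Or.inr ⟨h1, hKK, v, h2, hv⟩
      calc {K' : Set V | MaxClique G K' ∧ v ∈ K'}.ncard
          ≤ (insert K (N K)).ncard := Set.ncard_le_ncard hsub (Set.toFinite _)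
        _ ≤ (N K).ncard + 1 := Set.ncard_insert_le _ _
        _ ≤ cdeg G + 1 := by
            have := hNle K hK; omega
    · rw [Set.not_nonempty_iff_eq_empty] at hne
      simp [hne]
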